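/- arXiv:2004.12036 — 6 statements merged into one kernel-verified Lean document; each statement's English description precedes it below -/
import Mathlib

section
/- For real x > 0, one has ∫₀ˣ u/(1+e^u) du = Li₂(1−e^(−x)) − (1/2)·Li₂(1−e^(−2x)), where Li₂(z) = Σ_{n≥1} z^n/n² is the dilogarithm. -/
open Real

/-- The dilogarithm, defined by its Taylor series `Σ_{n ≥ 1} z^n / n²`. -/
noncomputable def Li2 (z : ℝ) : ℝ := ∑' n : ℕ, z ^ (n + 1) / ((n : ℝ) + 1) ^ 2

lemma hasDerivAt_Li2 {z : ℝ} (hz : |z| < 1) :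
    HasDerivAt Li2 (∑' n : ℕ, z ^ n / ((n : ℝ) + 1)) z := by
  set r : ℝ := (|z| + 1) / 2 with hr
  have hr0 : 0 ≤ r := by positivity
  have hzr : |z| < r := by rw [hr]; linarith
  have hr1 : r < 1 := by rw [hr]; linarith
  refine hasDerivAt_tsum_of_isPreconnected (u := fun n : ℕ => r ^ n)
      (g := fun (n : ℕ) (w : ℝ) => w ^ (n + 1) / ((n : ℝ) + 1) ^ 2)
      (g' := fun (n : ℕ) (w : ℝ) => w ^ n / ((n : ℝ) + 1))
      (summable_geometric_of_lt_one hr0 hr1) Metric.isOpen_ball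
      ((convex_ball (0:ℝ) r).isPreconnected) (y₀ := 0) ?_ ?_ ?_ ?_ ?_
  · intro n y _
    have h := (hasDerivAt_pow (n + 1) y).div_const (((n : ℝ) + 1) ^ 2)
    refine h.congr_deriv ?_
    have hn : ((n : ℝ) + 1) ≠ 0 := by positivity
    push_cast
    field_simp
  · intro n y hy
    have hyr : |y| < r := by simpa [Real.dist_eq] using hy
    have h1 : (0:ℝ) < (n : ℝ) + 1 := by positivity
    rw [Real.norm_eq_abs, abs_div, abs_pow, abs_of_pos h1]
    calc |y| ^ n / ((n:ℝ) + 1) ≤ |y| ^ n / 1 := by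
          apply div_le_div_of_nonneg_left (by positivity) one_pos ?_ |>.trans le_rfl
          linarith
      _ = |y| ^ n := by ring
      _ ≤ r ^ n := pow_le_pow_left₀ (abs_nonneg y) hyr.le n
  · simpa [Real.dist_eq] using (by positivity : (0:ℝ) < r)
  · apply summable_of_ne_finset_zero (s := ∅)
    intro n _
    simp
  · simpa [Real.dist_eq] using hzr

lemma tsum_D_pos {z : ℝ} (h0 : 0 < z) (h1 : z < 1) :
    ∑' n : ℕ, z ^ n / ((n : ℝ) + 1) = -Real.log (1 - z) / z := by
  have hz : |z| < 1 := by rw [abs_of_pos h0]; exact h1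
  have hs := Real.hasSum_pow_div_log_of_abs_lt_one hz
  have hs' : HasSum (fun n : ℕ => z * (z ^ n / ((n : ℝ) + 1))) (-Real.log (1 - z)) := by
    convert hs using 2 with n
    rw [pow_succ]
    ring
  have := (hs'.div_const z).tsum_eq
  rw [← this, tsum_congr]
  intro n
  field_simp

lemma tsum_D_zero : ∑' n : ℕ, (0:ℝ) ^ n / ((n : ℝ) + 1) = 1 := by
  rw [tsum_eq_single 0]
  · norm_num
  · intro n hn
    simp [zero_pow hn]

theorem integral_eq_dilog (x : ℝ) (hx : 0 < x) :
    ∫ u in (0:ℝ)..x, u / (1 + Real.exp u) =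
      Li2 (1 - Real.exp (-x)) - (1 / 2) * Li2 (1 - Real.exp (-2 * x)) := by
  set F : ℝ → ℝ := fun t => Li2 (1 - Real.exp (-t)) - (1 / 2) * Li2 (1 - Real.exp (-2 * t))
    with hF
  have key : ∀ t ∈ Set.uIcc (0:ℝ) x, HasDerivAt F (t / (1 + Real.exp t)) t := by
    intro t ht
    rw [Set.uIcc_of_le hx.le] at ht
    obtain ⟨ht0, htx⟩ := ht
    have he1 : Real.exp (-t) ≤ 1 := Real.exp_le_one_iff.mpr (by linarith)
    have he2 : Real.exp (-2 * t) ≤ 1 := Real.exp_le_one_iff.mpr (by nlinarith)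
    have hep1 : 0 < Real.exp (-t) := Real.exp_pos _
    have hep2 : 0 < Real.exp (-2 * t) := Real.exp_pos _
    have hz1 : |1 - Real.exp (-t)| < 1 := by rw [abs_lt]; constructor <;> linarith
    have hz2 : |1 - Real.exp (-2 * t)| < 1 := by rw [abs_lt]; constructor <;> linarith
    -- inner derivatives
    have g1 : HasDerivAt (fun s : ℝ => 1 - Real.exp (-s)) (Real.exp (-t)) t := by
      have := ((Real.hasDerivAt_exp (-t)).comp t ((hasDerivAt_id t).neg)).const_sub 1
      exact this.congr_deriv (by ring)
    have g2 : HasDerivAt (fun s : ℝ => 1 - Real.exp (-2 * s)) (2 * Real.exp (-2 * t)) t := by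
      have := ((Real.hasDerivAt_exp (-2 * t)).comp t
        ((hasDerivAt_id t).const_mul (-2 : ℝ))).const_sub 1
      exact this.congr_deriv (by ring)
    have h1 := (hasDerivAt_Li2 hz1).comp t g1
    have h2 := (hasDerivAt_Li2 hz2).comp t g2
    have hD : HasDerivAt F
        ((∑' n : ℕ, (1 - Real.exp (-t)) ^ n / ((n : ℝ) + 1)) * Real.exp (-t)
          - (1 / 2) * ((∑' n : ℕ, (1 - Real.exp (-2 * t)) ^ n / ((n : ℝ) + 1))
            * (2 * Real.exp (-2 * t)))) t := by
      exact (h1.sub ((h2.const_mul (1 / 2 : ℝ)))).congr_deriv (by ring)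
    convert hD using 1
    rcases eq_or_lt_of_le ht0 with h | h
    · subst h
      simp [tsum_D_zero]
    · -- t > 0
      have hlt1 : Real.exp (-t) < 1 := Real.exp_lt_one_iff.mpr (by linarith)
      have hlt2 : Real.exp (-2 * t) < 1 := Real.exp_lt_one_iff.mpr (by nlinarith)
      rw [tsum_D_pos (by linarith) (by linarith), tsum_D_pos (by linarith) (by linarith)]
      have e1 : 1 - (1 - Real.exp (-t)) = Real.exp (-t) := by ring
      have e2 : 1 - (1 - Real.exp (-2 * t)) = Real.exp (-2 * t) := by ring
      rw [e1, e2, Real.log_exp, Real.log_exp]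
      have hexp : Real.exp (-2 * t) = Real.exp (-t) * Real.exp (-t) := by
        rw [← Real.exp_add]; ring_nf
      have hb : Real.exp t = (Real.exp (-t))⁻¹ := by rw [← Real.exp_neg, neg_neg]
      rw [hexp, hb] at *
      set a := Real.exp (-t) with ha
      have ha0 : a ≠ 0 := hep1.ne'
      have h1a : 1 - a ≠ 0 := by linarith
      have h1aa : 1 - a * a ≠ 0 := by nlinarith
      have h1ai : 1 + a⁻¹ ≠ 0 := by positivity
      have h1a2 : 1 - a ^ 2 ≠ 0 := by nlinarith
      field_simp
      ring
  have hcont : Continuous fun u : ℝ => u / (1 + Real.exp u) := by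
    apply Continuous.div continuous_id (by continuity)
    intro u; positivity
  have := intervalIntegral.integral_eq_sub_of_hasDerivAt key (hcont.intervalIntegrable 0 x)
  rw [this]
  have hF0 : F 0 = 0 := by
    simp [hF, Li2]
  rw [hF0]
  simp [hF]
end

section
/- Let t > √2, t ≠ 2, and let β(t) satisfy β² = ∫₀^(βt) u/(1+e^u) du. Then β is differentiable and β'(t) = βt / (2(1+e^(βt)) − t²), which is strictly positive. -/
open Real

open intervalIntegral Filter Topology

/-- The antiderivative `x ↦ ∫ v in 0..x, v / (1 + e^v)`. -/
noncomputable def Gfun : ℝ → ℝ := fun x => ∫ v in (0:ℝ)..x, v / (1 + Real.exp v)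

lemma cont_g : Continuous (fun v : ℝ => v / (1 + Real.exp v)) := by
  apply Continuous.div continuous_id (by continuity)
  intro x; positivity

lemma Gfun_hasStrictDerivAt (x : ℝ) :
    HasStrictDerivAt Gfun (x / (1 + Real.exp x)) x :=
  intervalIntegral.integral_hasStrictDerivAt_right
    (cont_g.intervalIntegrable _ _) (cont_g.stronglyMeasurableAtFilter _ _)
    cont_g.continuousAt

lemma F_eq {b : ℝ} (hb : b ≠ 0) (s : ℝ) :
    (∫ u in (0:ℝ)..s, u / (1 + Real.exp (b * u))) = Gfun (b * s) / b ^ 2 := by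
  have h1 : (∫ u in (0:ℝ)..s, u / (1 + Real.exp (b * u)))
      = ∫ u in (0:ℝ)..s, b⁻¹ * ((u * b) / (1 + Real.exp (u * b))) := by
    apply intervalIntegral.integral_congr
    intro u _
    have hpos : (0:ℝ) < 1 + Real.exp (b * u) := by positivity
    show u / (1 + rexp (b * u)) = b⁻¹ * (u * b / (1 + rexp (u * b)))
    rw [mul_comm u b]
    field_simp
  rw [h1, intervalIntegral.integral_const_mul,
    intervalIntegral.integral_comp_mul_right (fun v => v / (1 + Real.exp v)) hb]
  simp only [zero_mul, smul_eq_mul, mul_comm s b]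
  show b⁻¹ * (b⁻¹ * Gfun (b * s)) = _
  ring

lemma F_strictAnti {b₁ b₂ s : ℝ} (hb : b₁ < b₂) (hs : 0 < s) :
    (∫ u in (0:ℝ)..s, u / (1 + Real.exp (b₂ * u)))
      < ∫ u in (0:ℝ)..s, u / (1 + Real.exp (b₁ * u)) := by
  apply intervalIntegral.integral_lt_integral_of_continuousOn_of_le_of_exists_lt hs
  · exact (Continuous.div continuous_id (by continuity) (fun x => by positivity)).continuousOn
  · exact (Continuous.div continuous_id (by continuity) (fun x => by positivity)).continuousOn
  · intro x hx
    have hx0 : 0 < x := hx.1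
    have h1 : (0:ℝ) < 1 + Real.exp (b₁ * x) := by positivity
    have h2 : Real.exp (b₁ * x) ≤ Real.exp (b₂ * x) :=
      Real.exp_le_exp.2 (by nlinarith)
    apply div_le_div_of_nonneg_left hx0.le h1
    linarith
  · refine ⟨s, Set.right_mem_Icc.2 hs.le, ?_⟩
    have h1 : (0:ℝ) < 1 + Real.exp (b₁ * s) := by positivity
    have h2 : Real.exp (b₁ * s) < Real.exp (b₂ * s) :=
      Real.exp_lt_exp.2 (by nlinarith)
    apply div_lt_div_of_pos_left hs h1
    linarith

lemma F_inj {s : ℝ} (hs : 0 < s) {b₁ b₂ : ℝ}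
    (h : (∫ u in (0:ℝ)..s, u / (1 + Real.exp (b₁ * u)))
      = ∫ u in (0:ℝ)..s, u / (1 + Real.exp (b₂ * u))) : b₁ = b₂ := by
  rcases lt_trichotomy b₁ b₂ with hlt | he | hgt
  · exact absurd h (ne_of_gt (F_strictAnti hlt hs))
  · exact he
  · exact absurd h (ne_of_lt (F_strictAnti hgt hs))

lemma Gfun_gt {x : ℝ} (hx : 0 < x) : x ^ 2 / (2 * (1 + Real.exp x)) < Gfun x := by
  have key : (∫ v in (0:ℝ)..x, v / (1 + Real.exp x)) < ∫ v in (0:ℝ)..x, v / (1 + Real.exp v) := by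
    apply intervalIntegral.integral_lt_integral_of_continuousOn_of_le_of_exists_lt hx
    · exact (continuous_id.div_const _).continuousOn
    · exact (Continuous.div continuous_id (by continuity) (fun y => by positivity)).continuousOn
    · intro v hv
      have h1 : (0:ℝ) < 1 + Real.exp v := by positivity
      apply div_le_div_of_nonneg_left hv.1.le h1
      have := Real.exp_le_exp.2 hv.2
      linarith
    · refine ⟨x / 2, ⟨by positivity, by linarith⟩, ?_⟩
      have h1 : (0:ℝ) < 1 + Real.exp (x / 2) := by positivity
      apply div_lt_div_of_pos_left (by positivity) h1
      have := Real.exp_lt_exp.2 (show x / 2 < x by linarith)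
      linarith
  have hc : (∫ v in (0:ℝ)..x, v / (1 + Real.exp x)) = x ^ 2 / (2 * (1 + Real.exp x)) := by
    rw [intervalIntegral.integral_div, integral_id]
    have h1 : (0:ℝ) < 1 + Real.exp x := by positivity
    field_simp
    ring
  rw [hc] at key
  exact key

lemma Gfun_lt {x : ℝ} (hx : x < 0) : Gfun x < x ^ 2 / (2 * (1 + Real.exp x)) := by
  have key : (∫ v in x..(0:ℝ), v / (1 + Real.exp x)) < ∫ v in x..(0:ℝ), v / (1 + Real.exp v) := by
    apply intervalIntegral.integral_lt_integral_of_continuousOn_of_le_of_exists_lt hx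
    · exact (continuous_id.div_const _).continuousOn
    · exact (Continuous.div continuous_id (by continuity) (fun y => by positivity)).continuousOn
    · intro v hv
      have h1 : (0:ℝ) < 1 + Real.exp x := by positivity
      have h2 : (0:ℝ) < 1 + Real.exp v := by positivity
      have h3 : Real.exp x ≤ Real.exp v := Real.exp_le_exp.2 hv.1.le
      rw [div_le_div_iff₀ h1 h2]
      nlinarith [hv.2]
    · refine ⟨x / 2, ⟨by linarith, by linarith⟩, ?_⟩
      have h1 : (0:ℝ) < 1 + Real.exp x := by positivity
      have h2 : (0:ℝ) < 1 + Real.exp (x / 2) := by positivity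
      have h3 : Real.exp x < Real.exp (x / 2) := Real.exp_lt_exp.2 (by linarith)
      rw [div_lt_div_iff₀ h1 h2]
      nlinarith
  have hc : (∫ v in x..(0:ℝ), v / (1 + Real.exp x)) = - (x ^ 2 / (2 * (1 + Real.exp x))) := by
    rw [intervalIntegral.integral_div, integral_id]
    have h1 : (0:ℝ) < 1 + Real.exp x := by positivity
    field_simp
    ring
  have hG : Gfun x = - ∫ v in x..(0:ℝ), v / (1 + Real.exp v) := by
    rw [Gfun, intervalIntegral.integral_symm]
  rw [hG]
  rw [hc] at key
  linarith

theorem beta_hasDerivAt (β : ℝ → ℝ)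
    (hβ : ∀ s : ℝ, s > Real.sqrt 2 →
      1 = ∫ u in (0:ℝ)..s, u / (1 + Real.exp (β s * u)))
    (t : ℝ) (ht : t > Real.sqrt 2) (ht2 : t ≠ 2) :
    HasDerivAt β (β t * t / (2 * (1 + Real.exp (β t * t)) - t ^ 2)) t ∧
      0 < β t * t / (2 * (1 + Real.exp (β t * t)) - t ^ 2) := by
  have hsqrt2 : (0:ℝ) < Real.sqrt 2 := Real.sqrt_pos.2 (by norm_num)
  have ht0 : 0 < t := hsqrt2.trans ht
  have heq := hβ t ht
  set b₀ := β t with hb0def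
  -- b₀ ≠ 0
  have hb0 : b₀ ≠ 0 := by
    intro h
    rw [h] at heq
    simp only [zero_mul, Real.exp_zero] at heq
    have h2 : (∫ u in (0:ℝ)..t, u / (1 + 1)) = t ^ 2 / 4 := by
      norm_num [intervalIntegral.integral_div, integral_id]
      ring
    rw [h2] at heq
    have h4 : (t - 2) * (t + 2) = 0 := by nlinarith
    rcases mul_eq_zero.1 h4 with h5 | h5
    · exact ht2 (by linarith)
    · linarith
  have hxne : b₀ * t ≠ 0 := mul_ne_zero hb0 ht0.ne'
  have hept : (0:ℝ) < 1 + Real.exp (b₀ * t) := by positivity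
  have hb2 : (0:ℝ) < b₀ ^ 2 := by positivity
  -- the key algebraic identity
  have hx0 : b₀ ^ 2 = Gfun (b₀ * t) := by
    rw [F_eq hb0 t] at heq
    field_simp at heq
    linarith
  -- positivity of the claimed derivative
  have hDsign : 0 < b₀ * t / (2 * (1 + Real.exp (b₀ * t)) - t ^ 2) := by
    rcases hxne.lt_or_gt with hneg | hpos
    · have hGl := Gfun_lt hneg
      rw [← hx0] at hGl
      have h6 : b₀ ^ 2 * (2 * (1 + Real.exp (b₀ * t))) < (b₀ * t) ^ 2 :=
        (lt_div_iff₀ (by positivity)).1 hGl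
      have hD : 2 * (1 + Real.exp (b₀ * t)) - t ^ 2 < 0 := by nlinarith
      exact div_pos_of_neg_of_neg hneg hD
    · have hGg := Gfun_gt hpos
      rw [← hx0] at hGg
      have h6 : (b₀ * t) ^ 2 < b₀ ^ 2 * (2 * (1 + Real.exp (b₀ * t))) :=
        (div_lt_iff₀ (by positivity)).1 hGg
      have hD : 0 < 2 * (1 + Real.exp (b₀ * t)) - t ^ 2 := by nlinarith
      exact div_pos hpos hD
  -- local inverse of Gfun at b₀ * t
  have hG := Gfun_hasStrictDerivAt (b₀ * t)
  have hG' : (b₀ * t) / (1 + Real.exp (b₀ * t)) ≠ 0 := div_ne_zero hxne hept.ne'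
  obtain ⟨Ginv, hGinvd, hrinv, hlinvat⟩ :
      ∃ g : ℝ → ℝ, HasStrictDerivAt g ((b₀ * t / (1 + Real.exp (b₀ * t)))⁻¹) (Gfun (b₀ * t)) ∧
        (∀ᶠ y in 𝓝 (Gfun (b₀ * t)), Gfun (g y) = y) ∧ g (Gfun (b₀ * t)) = b₀ * t := by
    refine ⟨hG.localInverse Gfun _ _ hG', hG.to_localInverse hG', ?_, ?_⟩
    · exact (hG.hasStrictFDerivAt_equiv hG').eventually_right_inverse
    · exact (hG.hasStrictFDerivAt_equiv hG').localInverse_apply_image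
  -- the inverse function φ of β
  have hval : Ginv (b₀ ^ 2) = b₀ * t := by rw [hx0]; exact hlinvat
  have hsqd : HasStrictDerivAt (fun b : ℝ => b ^ 2) (2 * b₀) b₀ := by
    simpa using hasStrictDerivAt_pow 2 b₀
  have hcomp := HasStrictDerivAt.comp_of_eq (x := b₀) hGinvd hsqd hx0.symm
  have hφd' := hcomp.div (hasStrictDerivAt_id b₀) hb0
  have hφd : HasStrictDerivAt (fun b : ℝ => Ginv (b ^ 2) / b)
      ((2 * (1 + Real.exp (b₀ * t)) - t ^ 2) / (b₀ * t)) b₀ := by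
    refine hφd'.congr_deriv ?_
    symm
    simp only [Function.comp, id_eq]
    rw [hval, inv_div]
    field_simp
  have hφ'ne : (2 * (1 + Real.exp (b₀ * t)) - t ^ 2) / (b₀ * t) ≠ 0 := by
    have h7 : (0:ℝ) < (b₀ * t / (2 * (1 + Real.exp (b₀ * t)) - t ^ 2))⁻¹ := inv_pos.2 hDsign
    rw [inv_div] at h7
    exact h7.ne'
  have hφb₀ : Ginv (b₀ ^ 2) / b₀ = t := by
    rw [hval]
    field_simp
  -- β is a local left inverse of φ
  have hfg : ∀ᶠ b in 𝓝 b₀, β (Ginv (b ^ 2) / b) = b := by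
    have h1 : ∀ᶠ b in 𝓝 b₀, b ≠ 0 := eventually_ne_nhds hb0
    have h2 : ∀ᶠ b in 𝓝 b₀, Gfun (Ginv (b ^ 2)) = b ^ 2 := by
      have hcont : Tendsto (fun b : ℝ => b ^ 2) (𝓝 b₀) (𝓝 (Gfun (b₀ * t))) := by
        rw [← hx0]; exact (continuous_pow 2).continuousAt
      exact hcont.eventually hrinv
    have h3 : ∀ᶠ b in 𝓝 b₀, Real.sqrt 2 < Ginv (b ^ 2) / b := by
      have hc : Tendsto (fun b : ℝ => Ginv (b ^ 2) / b) (𝓝 b₀) (𝓝 t) := by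
        have := hφd.hasDerivAt.continuousAt
        rw [ContinuousAt] at this
        simpa [hφb₀] using this
      exact hc.eventually (eventually_gt_nhds ht)
    filter_upwards [h1, h2, h3] with b hb hGb hsb
    have hs0 : 0 < Ginv (b ^ 2) / b := hsqrt2.trans hsb
    have heqs := hβ (Ginv (b ^ 2) / b) hsb
    have hbs : b * (Ginv (b ^ 2) / b) = Ginv (b ^ 2) := by field_simp
    have hFb : (∫ u in (0:ℝ)..(Ginv (b ^ 2) / b), u / (1 + Real.exp (b * u))) = 1 := by
      rw [F_eq hb, hbs, hGb]
      field_simp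
    exact F_inj hs0 (heqs.symm.trans hFb.symm)
  have hβd := hφd.to_local_left_inverse hφ'ne hfg
  rw [hφb₀, inv_div] at hβd
  exact ⟨hβd.hasDerivAt, hDsign⟩
end

section
/- There exists a constant c > 0 such that for all x ∈ (0,1) and all s ∈ ℝ, |log((1+e^{is}x)/(1+x)) − is·x/(1+x) + (s²/2)·x/(1+x)²| ≤ c·x|s|³/(1−x)³, where log denotes the principal branch. -/
open Complex

noncomputable section
namespace FxB

def u (t : ℝ) : ℂ := Complex.exp (t * I)

def z (x : ℝ) (t : ℝ) : ℂ := 1 + u t * x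

def g1 (x : ℝ) (t : ℝ) : ℂ := I - I / z x t

def g2 (x : ℝ) (t : ℝ) : ℂ := -(u t * x) / (z x t) ^ 2

def g3 (x : ℝ) (t : ℝ) : ℂ :=
  -(I * u t * x) / (z x t) ^ 2 + (2 * I * u t ^ 2 * x ^ 2) / (z x t) ^ 3

lemma abs_u (t : ℝ) : ‖u t‖ = 1 := Complex.norm_exp_ofReal_mul_I t

lemma abs_z_lb {x : ℝ} (hx : x ∈ Set.Ioo (0:ℝ) 1) (t : ℝ) :
    1 - x ≤ ‖z x t‖ := by
  have h1 : ‖(1:ℂ)‖ - ‖-(u t * (x:ℂ))‖ ≤ ‖(1:ℂ) - -(u t * x)‖ := norm_sub_norm_le _ _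
  simp only [norm_neg, norm_mul, abs_u, Complex.norm_real, Real.norm_eq_abs, one_mul,
    sub_neg_eq_add, norm_one] at h1
  simpa [z, abs_of_pos hx.1] using h1

lemma z_ne {x : ℝ} (hx : x ∈ Set.Ioo (0:ℝ) 1) (t : ℝ) : z x t ≠ 0 := by
  intro h
  have := abs_z_lb hx t
  rw [h] at this
  simp at this
  linarith [hx.2]

lemma hasDerivAt_u (t : ℝ) : HasDerivAt u (I * u t) t := by
  have h1 : HasDerivAt (fun t : ℝ => (t:ℂ) * I) I t := by
    simpa using (Complex.ofRealCLM.hasDerivAt (x := t)).mul_const I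
  have h2 := (Complex.hasDerivAt_exp ((t:ℂ) * I)).scomp t h1
  have : (cexp ∘ fun t : ℝ => (t:ℂ) * I) = u := rfl
  rw [this] at h2
  simpa [u, smul_eq_mul, mul_comm] using h2

lemma hasDerivAt_z (x : ℝ) (t : ℝ) : HasDerivAt (z x) (I * u t * x) t := by
  exact ((hasDerivAt_u t).mul_const (x:ℂ)).const_add 1

lemma z_ne' {x : ℝ} (hx : x ∈ Set.Ioo (0:ℝ) 1) (t : ℝ) : (1 : ℂ) + u t * x ≠ 0 :=
  z_ne hx t

lemma hasDerivAt_zsq (x : ℝ) (t : ℝ) :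
    HasDerivAt (fun t => (z x t) ^ 2) (2 * z x t * (I * u t * x)) t := by
  have h := (hasDerivAt_z x t).mul (hasDerivAt_z x t)
  have he : (z x * z x) = (fun t => (z x t) ^ 2) := by ext t; rw [Pi.mul_apply]; ring
  rw [he] at h
  refine h.congr_deriv ?_
  ring

lemma hasDerivAt_g1 {x : ℝ} (hx : x ∈ Set.Ioo (0:ℝ) 1) (t : ℝ) :
    HasDerivAt (g1 x) (g2 x t) t := by
  have hz := z_ne hx t
  have h := ((hasDerivAt_const t I).div (hasDerivAt_z x t) hz).const_sub I
  refine h.congr_deriv ?_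
  have hz' := z_ne' hx t
  simp only [g2, z]
  field_simp
  ring_nf
  simp only [Complex.I_sq]
  ring

lemma hasDerivAt_g2 {x : ℝ} (hx : x ∈ Set.Ioo (0:ℝ) 1) (t : ℝ) :
    HasDerivAt (g2 x) (g3 x t) t := by
  have hz := z_ne hx t
  have hnum : HasDerivAt (fun t => -(u t * (x:ℂ))) (-(I * u t * x)) t := by
    exact ((hasDerivAt_u t).mul_const (x:ℂ)).neg
  have h := hnum.div (hasDerivAt_zsq x t) (pow_ne_zero 2 hz)
  refine h.congr_deriv ?_
  have hz' := z_ne' hx t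
  simp only [g3, z]
  field_simp
  ring_nf

lemma mem_slit {x : ℝ} (hx : x ∈ Set.Ioo (0:ℝ) 1) (t : ℝ) :
    z x t / ((1:ℂ) + x) ∈ Complex.slitPlane := by
  have hre : (z x t).re = 1 + x * Real.cos t := by
    simp [z, u, Complex.add_re, Complex.mul_re, Complex.exp_ofReal_mul_I_re,
      Complex.exp_ofReal_mul_I_im]
    ring
  have h1 : 0 < (z x t).re := by
    rw [hre]
    nlinarith [Real.neg_one_le_cos t, hx.1, hx.2]
  have h2 : ((1:ℂ) + x) = ((1 + x : ℝ) : ℂ) := by push_cast; ring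
  rw [h2]
  refine Complex.mem_slitPlane_iff.2 (Or.inl ?_)
  rw [Complex.div_ofReal_re]
  have : (0:ℝ) < 1 + x := by linarith [hx.1]
  exact div_pos h1 this

lemma hasDerivAt_log_g {x : ℝ} (hx : x ∈ Set.Ioo (0:ℝ) 1) (t : ℝ) :
    HasDerivAt (fun t : ℝ => Complex.log (z x t / (1 + x))) (g1 x t) t := by
  have hw : HasDerivAt (fun t => z x t / ((1:ℂ) + x)) ((I * u t * x) / (1 + x)) t :=
    (hasDerivAt_z x t).div_const _
  have hlog := (Complex.hasDerivAt_log (mem_slit hx t)).scomp t hw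
  have h1x : ((1:ℂ) + x) ≠ 0 := by
    have h0 : (0:ℝ) < 1 + x := by linarith [hx.1]
    intro h
    have := congrArg Complex.re h
    simp at this
    linarith
  have hz' := z_ne' hx t
  refine hlog.congr_deriv ?_
  simp only [g1, z, smul_eq_mul]
  field_simp
  ring_nf

lemma g3_bound {x : ℝ} (hx : x ∈ Set.Ioo (0:ℝ) 1) (t : ℝ) :
    ‖g3 x t‖ ≤ 2 * x / (1 - x) ^ 3 := by
  obtain ⟨hx0, hx1⟩ := hx
  have h1 : (0:ℝ) < 1 - x := by linarith
  have hzb := abs_z_lb ⟨hx0, hx1⟩ t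
  have hzpos : (0:ℝ) < ‖z x t‖ := lt_of_lt_of_le h1 hzb
  have habs1 : ‖-(I * u t * x) / (z x t) ^ 2‖ = x / ‖z x t‖ ^ 2 := by
    rw [norm_div, norm_neg, norm_pow]
    simp [abs_u, abs_of_pos hx0]
  have habs2 : ‖(2 * I * u t ^ 2 * x ^ 2) / (z x t) ^ 3‖
      = 2 * x ^ 2 / ‖z x t‖ ^ 3 := by
    rw [norm_div, norm_pow]
    simp [abs_u, abs_of_pos hx0, abs_of_pos (pow_pos hx0 2)]
  have hb1 : x / ‖z x t‖ ^ 2 ≤ x / (1 - x) ^ 2 := by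
    apply div_le_div_of_nonneg_left (le_of_lt hx0) (by positivity)
    exact pow_le_pow_left₀ (le_of_lt h1) hzb 2
  have hb2 : 2 * x ^ 2 / ‖z x t‖ ^ 3 ≤ 2 * x ^ 2 / (1 - x) ^ 3 := by
    apply div_le_div_of_nonneg_left (by positivity) (by positivity)
    exact pow_le_pow_left₀ (le_of_lt h1) hzb 3
  have hsum : x / (1 - x) ^ 2 + 2 * x ^ 2 / (1 - x) ^ 3 ≤ 2 * x / (1 - x) ^ 3 := by
    have e : x / (1 - x) ^ 2 + 2 * x ^ 2 / (1 - x) ^ 3 = (x * (1 - x) + 2 * x ^ 2) / (1 - x) ^ 3 := by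
      field_simp
    rw [e]
    apply (div_le_div_iff_of_pos_right (pow_pos h1 3)).2
    nlinarith
  calc ‖g3 x t‖
      ≤ ‖-(I * u t * x) / (z x t) ^ 2‖
        + ‖(2 * I * u t ^ 2 * x ^ 2) / (z x t) ^ 3‖ := norm_add_le _ _
    _ ≤ x / (1 - x) ^ 2 + 2 * x ^ 2 / (1 - x) ^ 3 := by rw [habs1, habs2]; exact add_le_add hb1 hb2
    _ ≤ 2 * x / (1 - x) ^ 3 := hsum

lemma abs_mem_uIcc {s t : ℝ} (ht : t ∈ Set.uIcc 0 s) : |t| ≤ |s| := by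
  rcases le_total 0 s with h | h
  · rw [Set.uIcc_of_le h] at ht
    rw [_root_.abs_of_nonneg ht.1, _root_.abs_of_nonneg h]; exact ht.2
  · rw [Set.uIcc_of_ge h] at ht
    rw [_root_.abs_of_nonpos ht.2, _root_.abs_of_nonpos h]; linarith [ht.1]


lemma step1 {x : ℝ} (hx : x ∈ Set.Ioo (0:ℝ) 1) (t : ℝ) :
    ‖g2 x t - g2 x 0‖ ≤ (2 * x / (1 - x) ^ 3) * |t| := by
  have h := Convex.norm_image_sub_le_of_norm_hasDerivWithin_le
    (f := g2 x) (f' := g3 x) (s := Set.univ) (C := 2 * x / (1 - x) ^ 3)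
    (fun y _ => (hasDerivAt_g2 hx y).hasDerivWithinAt)
    (fun y _ => by exact g3_bound hx y)
    convex_univ (Set.mem_univ 0) (Set.mem_univ t)
  simpa using h

lemma step2 {x : ℝ} (hx : x ∈ Set.Ioo (0:ℝ) 1) (s : ℝ) :
    ‖g1 x s - g1 x 0 - (s : ℂ) * g2 x 0‖ ≤ (2 * x / (1 - x) ^ 3) * |s| ^ 2 := by
  set B := 2 * x / (1 - x) ^ 3 with hB
  have hB0 : 0 ≤ B := by
    have := g3_bound hx 0
    have := norm_nonneg (g3 x 0)
    linarith
  have hH : ∀ t : ℝ, HasDerivAt (fun t : ℝ => g1 x t - (t : ℂ) * g2 x 0)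
      (g2 x t - g2 x 0) t := by
    intro t
    have h2 : HasDerivAt (fun t : ℝ => (t : ℂ) * g2 x 0) (g2 x 0) t := by
      simpa using (Complex.ofRealCLM.hasDerivAt (x := t)).mul_const (g2 x 0)
    exact (hasDerivAt_g1 hx t).sub h2
  have h := Convex.norm_image_sub_le_of_norm_hasDerivWithin_le
    (f := fun t : ℝ => g1 x t - (t : ℂ) * g2 x 0) (f' := fun t => g2 x t - g2 x 0)
    (s := Set.uIcc 0 s) (C := B * |s|)
    (fun y _ => (hH y).hasDerivWithinAt)
    (fun y hy => le_trans (step1 hx y) (by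
      have := abs_mem_uIcc hy
      have : B * |y| ≤ B * |s| := mul_le_mul_of_nonneg_left this hB0
      linarith))
    (convex_uIcc 0 s) Set.left_mem_uIcc Set.right_mem_uIcc
  have he : ‖(fun t : ℝ => g1 x t - (t : ℂ) * g2 x 0) s - (fun t : ℝ => g1 x t - (t : ℂ) * g2 x 0) 0‖
      = ‖g1 x s - g1 x 0 - (s : ℂ) * g2 x 0‖ := by
    congr 1
    push_cast
    ring
  rw [he] at h
  calc ‖g1 x s - g1 x 0 - (s : ℂ) * g2 x 0‖ ≤ B * |s| * ‖s - 0‖ := h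
    _ = B * |s| ^ 2 := by rw [sub_zero, Real.norm_eq_abs]; ring

lemma step3 {x : ℝ} (hx : x ∈ Set.Ioo (0:ℝ) 1) (s : ℝ) :
    ‖(Complex.log (z x s / (1 + x)) - (s : ℂ) * g1 x 0 - ((s : ℂ) ^ 2 / 2) * g2 x 0)
      - Complex.log (z x 0 / (1 + x))‖ ≤ (2 * x / (1 - x) ^ 3) * |s| ^ 3 := by
  set B := 2 * x / (1 - x) ^ 3 with hB
  have hB0 : 0 ≤ B := by
    have := g3_bound hx 0
    have := norm_nonneg (g3 x 0)
    linarith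
  set G : ℝ → ℂ := fun t => Complex.log (z x t / (1 + x)) - (t : ℂ) * g1 x 0
      - ((t : ℂ) ^ 2 / 2) * g2 x 0 with hG
  have hG' : ∀ t : ℝ, HasDerivAt G (g1 x t - g1 x 0 - (t : ℂ) * g2 x 0) t := by
    intro t
    have h1 : HasDerivAt (fun t : ℝ => (t : ℂ) * g1 x 0) (g1 x 0) t := by
      simpa using (Complex.ofRealCLM.hasDerivAt (x := t)).mul_const (g1 x 0)
    have hsq : HasDerivAt (fun t : ℝ => ((t : ℂ) ^ 2 / 2) * g2 x 0) ((t : ℂ) * g2 x 0) t := by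
      have hc := Complex.ofRealCLM.hasDerivAt (x := t)
      have h2 : HasDerivAt (fun t : ℝ => (t : ℂ) * (t : ℂ)) ((t:ℂ) + (t:ℂ)) t := by
        refine (hc.mul hc).congr_deriv ?_
        simp
      have h3 := (h2.div_const 2).mul_const (g2 x 0)
      have he : (fun t : ℝ => (t : ℂ) * (t : ℂ) / 2 * g2 x 0)
          = (fun t : ℝ => ((t : ℂ) ^ 2 / 2) * g2 x 0) := by ext t; ring
      rw [he] at h3
      refine h3.congr_deriv ?_
      ring
    exact ((hasDerivAt_log_g hx t).sub h1).sub hsq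
  have h := Convex.norm_image_sub_le_of_norm_hasDerivWithin_le
    (f := G) (f' := fun t => g1 x t - g1 x 0 - (t : ℂ) * g2 x 0)
    (s := Set.uIcc 0 s) (C := B * |s| ^ 2)
    (fun y _ => (hG' y).hasDerivWithinAt)
    (fun y hy => le_trans (step2 hx y) (by
      have h1 := abs_mem_uIcc hy
      have h2 : |y| ^ 2 ≤ |s| ^ 2 := by
        apply pow_le_pow_left₀ (abs_nonneg y) h1
      exact mul_le_mul_of_nonneg_left h2 hB0))
    (convex_uIcc 0 s) Set.left_mem_uIcc Set.right_mem_uIcc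
  have hG0 : G 0 = Complex.log (z x 0 / (1 + x)) := by
    simp [hG]
  calc ‖G s - Complex.log (z x 0 / (1 + x))‖ = ‖G s - G 0‖ := by rw [hG0]
    _ ≤ B * |s| ^ 2 * ‖s - 0‖ := h
    _ = B * |s| ^ 3 := by rw [sub_zero, Real.norm_eq_abs]; ring

end FxB
end

open FxB in
theorem f_x_bound :
    ∃ c : ℝ, 0 < c ∧ ∀ x : ℝ, x ∈ Set.Ioo (0:ℝ) 1 → ∀ s : ℝ,
      ‖(Complex.log ((1 + Complex.exp (s * Complex.I) * x) / (1 + x))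
          - s * Complex.I * (x / (1 + x)) + (s ^ 2 / 2) * (x / (1 + x) ^ 2))‖
        ≤ c * x * |s| ^ 3 / (1 - x) ^ 3 := by
  refine ⟨2, by norm_num, fun x hx s => ?_⟩
  have h1x : ((1:ℂ) + x) ≠ 0 := by
    intro h
    have := congrArg Complex.re h
    simp at this
    linarith [hx.1]
  have hu0 : u 0 = 1 := by simp [u]
  have hz0 : z x 0 = 1 + x := by simp [z, hu0]
  have hlog0 : Complex.log (z x 0 / (1 + x)) = 0 := by
    rw [hz0, div_self h1x, Complex.log_one]
  have hg10 : g1 x 0 = Complex.I * x / (1 + x) := by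
    rw [g1, hz0]
    field_simp
    ring
  have hg20 : g2 x 0 = -(x / (1 + x) ^ 2) := by
    rw [g2, hz0, hu0]
    field_simp
  have hexpr : (Complex.log ((1 + Complex.exp (s * Complex.I) * x) / (1 + x))
          - s * Complex.I * (x / (1 + x)) + (s ^ 2 / 2) * (x / (1 + x) ^ 2))
      = (Complex.log (z x s / (1 + x)) - (s : ℂ) * g1 x 0 - ((s : ℂ) ^ 2 / 2) * g2 x 0)
        - Complex.log (z x 0 / (1 + x)) := by
    rw [hlog0, sub_zero, hg10, hg20]
    have hzz : z x s = 1 + Complex.exp (s * Complex.I) * x := by rfl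
    rw [hzz]
    push_cast
    ring
  rw [hexpr]
  calc ‖(Complex.log (z x s / (1 + x)) - (s : ℂ) * g1 x 0 - ((s : ℂ) ^ 2 / 2) * g2 x 0)
        - Complex.log (z x 0 / (1 + x))‖
      ≤ (2 * x / (1 - x) ^ 3) * |s| ^ 3 := step3 hx s
    _ = 2 * x * |s| ^ 3 / (1 - x) ^ 3 := by ring
end

section
/- For |s| ≤ (1−x)/2 with 0 < x < 1, the following series identity holds: log((1+xe^{is})/(1+x)) = −Σ_{k≥1} (is)^k/k! · Σ_{j≥1} (−x)^j j^{k−1}, and the double series converges absolutely. -/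
open Complex

set_option maxHeartbeats 1000000 in
theorem log_series_identity (x s : ℝ) (hx0 : 0 < x) (hx1 : x < 1)
    (hs : |s| ≤ (1 - x) / 2) :
    Summable (fun p : ℕ × ℕ =>
      ‖(Complex.I * s) ^ (p.1 + 1) / (Nat.factorial (p.1 + 1) : ℂ) *
        ((-(x : ℂ)) ^ (p.2 + 1) * ((p.2 : ℂ) + 1) ^ p.1)‖) ∧
    Complex.log ((1 + (x : ℂ) * Complex.exp (Complex.I * s)) / (1 + x)) =
      -∑' k : ℕ, (Complex.I * s) ^ (k + 1) / (Nat.factorial (k + 1) : ℂ) *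
        ∑' j : ℕ, (-(x : ℂ)) ^ (j + 1) * ((j : ℂ) + 1) ^ k := by
  set f : ℕ × ℕ → ℂ := fun p =>
      (Complex.I * s) ^ (p.1 + 1) / (Nat.factorial (p.1 + 1) : ℂ) *
        ((-(x : ℂ)) ^ (p.2 + 1) * ((p.2 : ℂ) + 1) ^ p.1) with hfdef
  set g : ℕ × ℕ → ℝ := fun p =>
      |s| ^ (p.1+1) / (Nat.factorial (p.1+1)) * (x ^ (p.2+1) * ((p.2:ℝ)+1)^p.1) with hg
  have hnorm : ∀ p : ℕ × ℕ, ‖f p‖ = g p := by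
    rintro ⟨k, j⟩
    have h1 : ((j : ℂ) + 1) = (((j:ℝ)+1 : ℝ) : ℂ) := by push_cast; ring
    rw [hfdef, hg]
    simp only [norm_mul, norm_div, norm_pow, h1, Complex.norm_real, Complex.norm_I,
      Complex.norm_natCast, norm_neg, one_mul, Real.norm_eq_abs]
    rw [abs_of_pos hx0, _root_.abs_of_nonneg (by positivity : (0:ℝ) ≤ (j:ℝ)+1)]
  -- summability of the real double series
  have hgnn : ∀ p : ℕ × ℕ, 0 ≤ g p := fun p => by positivity
  have hgkj : ∀ k j : ℕ, g (k, j)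
      = x^(j+1)/((j:ℝ)+1) * ((((j:ℝ)+1)*|s|)^(k+1)/(Nat.factorial (k+1))) := by
    intro k j
    have hj : ((j:ℝ)+1) ≠ 0 := by positivity
    have hfac : ((k+1).factorial : ℝ) ≠ 0 := by positivity
    rw [hg]; simp only; rw [mul_pow]; field_simp; ring
  have hxe : x * Real.exp |s| < 1 := by
    have h2 : (1 - x) / 2 < -Real.log x := by
      have := Real.log_le_sub_one_of_pos hx0; linarith
    have h3 : Real.exp |s| < x⁻¹ := by
      have := Real.exp_lt_exp.2 (lt_of_le_of_lt hs h2)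
      rwa [Real.exp_neg, Real.exp_log hx0] at this
    calc x * Real.exp |s| < x * x⁻¹ := (mul_lt_mul_iff_right₀ hx0).2 h3
      _ = 1 := mul_inv_cancel₀ hx0.ne'
  have hfib : ∀ j : ℕ, Summable (fun k => g (k, j)) := by
    intro j
    apply Summable.congr _ (fun k => (hgkj k j).symm)
    exact ((summable_nat_add_iff 1).2
      (Real.summable_pow_div_factorial (((j:ℝ)+1)*|s|))).mul_left _
  have hexpsum : ∀ r : ℝ, 0 ≤ r →
      (∑' k : ℕ, r^(k+1)/(Nat.factorial (k+1))) ≤ Real.exp r := by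
    intro r hr
    have he : Real.exp r = ∑' n : ℕ, r^n/(Nat.factorial n) := by
      rw [Real.exp_eq_exp_ℝ, NormedSpace.exp_eq_tsum_div]
    rw [he]
    refine ((summable_nat_add_iff 1).2 (Real.summable_pow_div_factorial r)).tsum_le_tsum_of_inj
      (· + 1) (fun a b h => by simpa using h)
      (fun c _ => by positivity) (fun k => le_refl _)
      (Real.summable_pow_div_factorial r)
  have htsum_le : ∀ j : ℕ, (∑' k, g (k, j)) ≤ (x * Real.exp |s|)^(j+1) := by
    intro j
    have h1 : (∑' k, g (k, j))
        = x^(j+1)/((j:ℝ)+1) * ∑' k, ((((j:ℝ)+1)*|s|)^(k+1)/(Nat.factorial (k+1))) := by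
      rw [tsum_congr (fun k => hgkj k j), tsum_mul_left]
    rw [h1]
    have h2 : Real.exp (((j:ℝ)+1)*|s|) = (Real.exp |s|)^(j+1) := by
      rw [show ((j:ℝ)+1) = ((j+1 : ℕ) : ℝ) by push_cast; ring, Real.exp_nat_mul]
    calc x^(j+1)/((j:ℝ)+1) * ∑' k, ((((j:ℝ)+1)*|s|)^(k+1)/(Nat.factorial (k+1)))
        ≤ x^(j+1)/((j:ℝ)+1) * Real.exp (((j:ℝ)+1)*|s|) :=
          mul_le_mul_of_nonneg_left (hexpsum _ (by positivity)) (by positivity)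
      _ = (x * Real.exp |s|)^(j+1) / ((j:ℝ)+1) := by rw [h2, mul_pow]; ring
      _ ≤ (x * Real.exp |s|)^(j+1) := div_le_self (by positivity) (by simp)
  have hGsum : Summable g := by
    have hG : Summable (fun p : ℕ × ℕ => g (p.2, p.1)) := by
      rw [summable_prod_of_nonneg (fun p => hgnn _)]
      refine ⟨hfib, ?_⟩
      apply Summable.of_nonneg_of_le (fun j => tsum_nonneg (fun k => hgnn _)) htsum_le
      exact (summable_nat_add_iff 1).2
        (summable_geometric_of_lt_one (by positivity) hxe)
    exact (Equiv.prodComm ℕ ℕ).summable_iff.mp hG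
  have hnormsum : Summable (fun p : ℕ × ℕ => ‖f p‖) :=
    hGsum.congr fun p => (hnorm p).symm
  refine ⟨hnormsum, ?_⟩
  have hfsum : Summable f := hnormsum.of_norm
  -- the log series
  set w : ℂ := (x : ℂ) * Complex.exp (Complex.I * s) with hwdef
  have hwnorm : ‖w‖ = x := by
    rw [hwdef, norm_mul, Complex.norm_real, Complex.norm_exp]
    simp [abs_of_pos hx0]
  have hnw : ‖-w‖ < 1 := by rw [norm_neg, hwnorm]; exact hx1
  have hA' : HasSum (fun j : ℕ => (-w)^(j+1) / ((j:ℂ)+1)) (-Complex.log (1 + w)) := by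
    have hA : HasSum (fun n : ℕ => (-w)^n / n) (-Complex.log (1 + w)) := by
      simpa using Complex.hasSum_taylorSeries_neg_log hnw
    have := (hasSum_nat_add_iff' (f := fun n : ℕ => (-w)^n / n) 1).2 hA
    simp only [Finset.range_one, Finset.sum_singleton, pow_zero, Nat.cast_zero,
      div_zero, sub_zero] at this
    convert this using 2 with j
    · rfl
    push_cast; ring_nf
  have hnx : ‖-((x:ℂ))‖ < 1 := by
    rw [norm_neg, Complex.norm_real, Real.norm_eq_abs, abs_of_pos hx0]; exact hx1
  have hB' : HasSum (fun j : ℕ => (-(x:ℂ))^(j+1) / ((j:ℂ)+1))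
      (-Complex.log (1 + (x:ℂ))) := by
    have hB : HasSum (fun n : ℕ => (-(x:ℂ))^n / n) (-Complex.log (1 + (x:ℂ))) := by
      simpa using Complex.hasSum_taylorSeries_neg_log hnx
    have := (hasSum_nat_add_iff' (f := fun n : ℕ => (-(x:ℂ))^n / n) 1).2 hB
    simp only [Finset.range_one, Finset.sum_singleton, pow_zero, Nat.cast_zero,
      div_zero, sub_zero] at this
    convert this using 2 with j
    · rfl
    push_cast; ring_nf
  -- inner sums
  have hinner : ∀ j : ℕ, HasSum (fun k : ℕ => f (k, j))
      ((-(x:ℂ))^(j+1) / ((j:ℂ)+1) * (Complex.exp (Complex.I * s * ((j:ℂ)+1)) - 1)) := by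
    intro j
    set z : ℂ := Complex.I * s * ((j:ℂ)+1) with hz
    have hE : HasSum (fun n : ℕ => z^n / (Nat.factorial n : ℂ)) (Complex.exp z) := by
      rw [Complex.exp_eq_exp_ℂ]
      exact NormedSpace.expSeries_div_hasSum_exp z
    have hE' : HasSum (fun k : ℕ => z^(k+1) / (Nat.factorial (k+1) : ℂ))
        (Complex.exp z - 1) := by
      have := (hasSum_nat_add_iff'
        (f := fun n : ℕ => z^n / (Nat.factorial n : ℂ)) 1).2 hE
      simpa using this
    have hm := hE'.mul_left ((-(x:ℂ))^(j+1) / ((j:ℂ)+1))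
    convert hm using 2 with k
    · rfl
    have hj : ((j:ℂ)+1) ≠ 0 := by
      have := Nat.cast_add_one_ne_zero (R := ℂ) j
      push_cast at this ⊢; exact this
    have hfac : ((Nat.factorial (k+1) : ℂ)) ≠ 0 :=
      Nat.cast_ne_zero.mpr (Nat.factorial_ne_zero (k+1))
    have hzp : z^(k+1) = (Complex.I*(s:ℂ))^(k+1) * ((j:ℂ)+1)^k * ((j:ℂ)+1) := by
      rw [hz, mul_pow, pow_succ]; ring
    rw [hfdef]
    simp only
    rw [hzp]
    field_simp
  -- outer sum over j of the inner sums
  have hterm : ∀ j : ℕ, (-(x:ℂ))^(j+1) / ((j:ℂ)+1) *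
      (Complex.exp (Complex.I * s * ((j:ℂ)+1)) - 1)
      = (-w)^(j+1)/((j:ℂ)+1) - (-(x:ℂ))^(j+1)/((j:ℂ)+1) := by
    intro j
    have hwp : (-w)^(j+1)
        = (-(x:ℂ))^(j+1) * Complex.exp (Complex.I*s*((j:ℂ)+1)) := by
      rw [hwdef, show -((x:ℂ) * Complex.exp (Complex.I*s))
          = (-(x:ℂ)) * Complex.exp (Complex.I*s) by ring, mul_pow]
      congr 1
      rw [← Complex.exp_nat_mul]
      congr 1
      push_cast; ring
    rw [hwp]; ring
  have hout : HasSum (fun j : ℕ => ∑' k, f (k, j))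
      (-Complex.log (1 + w) + Complex.log (1 + (x:ℂ))) := by
    have hC := hA'.sub hB'
    rw [sub_neg_eq_add] at hC
    have heq : (fun j : ℕ => ∑' k, f (k, j))
        = fun j : ℕ => (-w)^(j+1)/((j:ℂ)+1) - (-(x:ℂ))^(j+1)/((j:ℂ)+1) :=
      funext fun j => by rw [(hinner j).tsum_eq, hterm j]
    rw [heq]
    exact hC
  -- swap the order of summation
  have hswap : ∑' j : ℕ, ∑' k : ℕ, f (k, j) = ∑' k : ℕ, ∑' j : ℕ, f (k, j) :=
    Summable.tsum_comm (f := fun k j => f (k, j)) hfsum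
  have hrhs : ∀ k : ℕ, (Complex.I * s)^(k+1) / (Nat.factorial (k+1) : ℂ) *
      ∑' j : ℕ, (-(x:ℂ))^(j+1) * ((j:ℂ)+1)^k = ∑' j : ℕ, f (k, j) :=
    fun k => (tsum_mul_left).symm
  -- log of the quotient
  have h1w : (1 : ℂ) + w ≠ 0 := by
    intro h
    have hw1 : w = -1 := by
      have := eq_neg_of_add_eq_zero_right h
      simpa using this
    rw [hw1] at hwnorm
    simp at hwnorm
    linarith
  have hlogq : Complex.log ((1 + w)/(1 + (x:ℂ)))
      = Complex.log (1 + w) - Complex.log (1 + (x:ℂ)) := by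
    have hxr : (1:ℂ) + (x:ℂ) = ((1+x : ℝ) : ℂ) := by push_cast; ring
    have hpos : (0:ℝ) < (1+x)⁻¹ := by positivity
    have hq : (1 + w)/(1 + (x:ℂ)) = ((((1+x)⁻¹ : ℝ)) : ℂ) * (1 + w) := by
      rw [hxr, div_eq_inv_mul, Complex.ofReal_inv]
    rw [hq, Complex.log_ofReal_mul hpos h1w, Real.log_inv, hxr,
        ← Complex.ofReal_log (by linarith : (0:ℝ) ≤ 1+x)]
    push_cast; ring
  rw [hlogq, tsum_congr hrhs, ← hswap, hout.tsum_eq]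
  ring
end

section
/- Let ε ∈ (0, 1/2] and let ‖α‖ denote the distance from α to the nearest integer. Then there exists a constant c > 0 (depending only on ε) such that for all positive integers n and all α with ε/n ≤ α ≤ 1/2, one has Σ_{k=1}^{n} ‖kα‖² ≥ c·n. -/
open Real

lemma rs_int_dist (x : ℝ) (m : ℤ) (h1 : 0 ≤ x) (h2 : x ≤ 1/2) : x ≤ |x - m| := by
  rcases le_or_gt (m : ℝ) 0 with h | h
  · rw [abs_of_nonneg (by linarith)]; linarith
  · have hm : (1 : ℤ) ≤ m := by exact_mod_cast Int.cast_pos.mp h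
    have hm' : (1 : ℝ) ≤ (m : ℝ) := by exact_mod_cast hm
    rw [abs_of_nonpos (by linarith)]; linarith

lemma rs_quarter_dist (x : ℝ) (m : ℤ) (h1 : 1/4 ≤ x) (h2 : x ≤ 3/4) : 1/4 ≤ |x - m| := by
  rcases le_or_gt (m : ℝ) 0 with h | h
  · rw [abs_of_nonneg (by linarith)]; linarith
  · have hm : (1 : ℤ) ≤ m := by exact_mod_cast Int.cast_pos.mp h
    have hm' : (1 : ℝ) ≤ (m : ℝ) := by exact_mod_cast hm
    rw [abs_of_nonpos (by linarith)]; linarith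

lemma rs_sumsq (n : ℕ) : (n : ℝ)^3 / 3 ≤ ∑ k ∈ Finset.Icc 1 n, (k : ℝ)^2 := by
  induction n with
  | zero => simp
  | succ n ih =>
    rw [Finset.sum_Icc_succ_top (by omega)]
    push_cast
    nlinarith [ih, Nat.cast_nonneg (α := ℝ) n]

lemma rs_pair_sum (f : ℕ → ℝ) (hf0 : ∀ k, 0 ≤ f k) (s n : ℕ) (hsn : s ≤ n)
    (pair : ∀ k : ℕ, 1/32 ≤ f k + f (k + s)) :
    ((n - s : ℕ) : ℝ) * (1/32) ≤ 2 * ∑ k ∈ Finset.Icc 1 n, f k := by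
  have hB : ∑ k ∈ Finset.Icc 1 (n - s), f (k + s) = ∑ k ∈ Finset.Icc (1 + s) n, f k := by
    have hmap : (Finset.Icc 1 (n - s)).map (addRightEmbedding s) = Finset.Icc (1 + s) n := by
      rw [Finset.map_add_right_Icc]
      congr 1
      omega
    rw [← hmap, Finset.sum_map]
    apply Finset.sum_congr rfl
    intro x _
    simp [addRightEmbedding_apply]
  have hA : ∑ k ∈ Finset.Icc 1 (n - s), f k ≤ ∑ k ∈ Finset.Icc 1 n, f k :=
    Finset.sum_le_sum_of_subset_of_nonneg
      (Finset.Icc_subset_Icc_right (Nat.sub_le n s)) (fun k _ _ => hf0 k)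
  have hB' : ∑ k ∈ Finset.Icc (1 + s) n, f k ≤ ∑ k ∈ Finset.Icc 1 n, f k :=
    Finset.sum_le_sum_of_subset_of_nonneg
      (Finset.Icc_subset_Icc_left (by omega)) (fun k _ _ => hf0 k)
  have hcard : ((n - s : ℕ) : ℝ) * (1/32) ≤ ∑ k ∈ Finset.Icc 1 (n - s), (f k + f (k + s)) := by
    have h := Finset.card_nsmul_le_sum (Finset.Icc 1 (n - s))
      (fun k => f k + f (k + s)) (1/32) (fun k _ => pair k)
    rw [Nat.card_Icc] at h
    simpa [nsmul_eq_mul, Nat.add_sub_cancel] using h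
  rw [Finset.sum_add_distrib, hB] at hcard
  linarith

set_option maxHeartbeats 1000000 in
theorem roth_szekeres (ε : ℝ) (hε0 : 0 < ε) (hε : ε ≤ 1 / 2) :
    ∃ c : ℝ, 0 < c ∧ ∀ n : ℕ, 0 < n → ∀ α : ℝ,
      ε / n ≤ α → α ≤ 1 / 2 →
      c * n ≤ ∑ k ∈ Finset.Icc 1 n, |(k : ℝ) * α - round ((k : ℝ) * α)| ^ 2 := by
  refine ⟨min (ε^2/3) (1/256), lt_min (by positivity) (by norm_num), ?_⟩
  intro n hn α hlo hhi
  have hn' : (0 : ℝ) < n := by exact_mod_cast hn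
  have hα0 : 0 < α := lt_of_lt_of_le (by positivity) hlo
  have hεn : ε / n ≤ α := hlo
  by_cases hsmall : α ≤ 1 / (2 * n)
  · -- Case 1: all kα ≤ 1/2, so ‖kα‖ = kα
    have key : ∀ k ∈ Finset.Icc 1 n, ((k : ℝ) * α)^2 ≤ |(k : ℝ) * α - round ((k : ℝ) * α)| ^ 2 := by
      intro k hk
      have hk2 : (k : ℝ) ≤ n := by exact_mod_cast (Finset.mem_Icc.mp hk).2
      have h1 : 0 ≤ (k : ℝ) * α := by positivity
      have h2 : (k : ℝ) * α ≤ 1/2 := by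
        have : (k : ℝ) * α ≤ n * α := by nlinarith
        have h3 : (n : ℝ) * α ≤ 1/2 := by
          rw [le_div_iff₀ (by positivity)] at hsmall
          nlinarith
        linarith
      have := rs_int_dist ((k : ℝ) * α) (round ((k : ℝ) * α)) h1 h2
      nlinarith [abs_nonneg ((k : ℝ) * α - round ((k : ℝ) * α))]
    have hsum : ∑ k ∈ Finset.Icc 1 n, ((k : ℝ) * α)^2 ≤
        ∑ k ∈ Finset.Icc 1 n, |(k : ℝ) * α - round ((k : ℝ) * α)| ^ 2 :=
      Finset.sum_le_sum key
    have heq : ∑ k ∈ Finset.Icc 1 n, ((k : ℝ) * α)^2 = α^2 * ∑ k ∈ Finset.Icc 1 n, (k : ℝ)^2 := by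
      rw [Finset.mul_sum]; apply Finset.sum_congr rfl; intro k _; ring
    have h4 : ε^2 / 3 * n ≤ α^2 * ((n : ℝ)^3 / 3) := by
      have hα : ε / n ≤ α := hlo
      have : ε ≤ α * n := by
        rw [div_le_iff₀ hn'] at hα; linarith
      nlinarith [sq_nonneg (α * n - ε), hε0.le, hα0.le]
    have h5 : α^2 * ((n : ℝ)^3 / 3) ≤ α^2 * ∑ k ∈ Finset.Icc 1 n, (k : ℝ)^2 :=
      mul_le_mul_of_nonneg_left (rs_sumsq n) (by positivity)
    calc min (ε^2/3) (1/256) * n ≤ ε^2/3 * n := by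
          apply mul_le_mul_of_nonneg_right (min_le_left _ _) hn'.le
      _ ≤ α^2 * ((n : ℝ)^3 / 3) := h4
      _ ≤ α^2 * ∑ k ∈ Finset.Icc 1 n, (k : ℝ)^2 := h5
      _ = ∑ k ∈ Finset.Icc 1 n, ((k : ℝ) * α)^2 := heq.symm
      _ ≤ _ := hsum
  · -- Case 2: α > 1/(2n)
    push_neg at hsmall
    have hpos : 0 < 1 / (4 * α) := by positivity
    obtain ⟨s, hs_pos, hs_lb, hs_ub⟩ :
        ∃ s : ℕ, 0 < s ∧ 1 / (4 * α) ≤ (s : ℝ) ∧ (s : ℝ) < 1 / (4 * α) + 1 :=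
      ⟨⌈1 / (4 * α)⌉₊, Nat.ceil_pos.mpr hpos, Nat.le_ceil _, Nat.ceil_lt_add_one hpos.le⟩
    have hsα1 : 1/4 ≤ (s : ℝ) * α := by
      have := mul_le_mul_of_nonneg_right hs_lb hα0.le
      calc (1:ℝ)/4 = 1 / (4 * α) * α := by field_simp
        _ ≤ (s : ℝ) * α := this
    have hsα2 : (s : ℝ) * α ≤ 3/4 := by
      have := mul_le_mul_of_nonneg_right hs_ub.le hα0.le
      have h1 : (1 / (4 * α) + 1) * α = 1/4 + α := by field_simp
      nlinarith
    have hhalf : 1 / (4 * α) < (n : ℝ) / 2 := by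
      rw [div_lt_div_iff₀ (by positivity) (by norm_num)]
      rw [div_lt_iff₀ (by positivity)] at hsmall
      nlinarith
    have hs2 : 2 * s ≤ n + 1 := by
      have : (s : ℝ) < (n : ℝ) / 2 + 1 := by linarith
      have h2 : ((2 * s : ℕ) : ℝ) < ((n + 2 : ℕ) : ℝ) := by push_cast; linarith
      have := Nat.cast_lt.mp h2
      omega
    have hsn : s ≤ n := by omega
    have hn2 : 2 ≤ n := by
      by_contra h
      have hn1 : n = 1 := by omega
      rw [hn1] at hsmall
      push_cast at hsmall
      norm_num at hsmall
      linarith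
    -- pair bound
    have pair : ∀ k : ℕ, 1/32 ≤ |(k : ℝ) * α - round ((k : ℝ) * α)| ^ 2 +
        |((k + s : ℕ) : ℝ) * α - round (((k + s : ℕ) : ℝ) * α)| ^ 2 := by
      intro k
      set a : ℝ := (k : ℝ) * α - round ((k : ℝ) * α) with ha
      set b : ℝ := ((k + s : ℕ) : ℝ) * α - round (((k + s : ℕ) : ℝ) * α) with hb
      set m : ℤ := round (((k + s : ℕ) : ℝ) * α) - round ((k : ℝ) * α) with hm
      have hdiff : b - a = (s : ℝ) * α - (m : ℝ) := by
        rw [ha, hb, hm]; push_cast; ring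
      have h14 : 1/4 ≤ |(s : ℝ) * α - (m : ℝ)| := rs_quarter_dist _ m hsα1 hsα2
      rw [← hdiff] at h14
      have htri : |b - a| ≤ |a| + |b| := by
        calc |b - a| ≤ |b| + |a| := abs_sub _ _
          _ = |a| + |b| := by ring
      have hab : 1/4 ≤ |a| + |b| := le_trans h14 htri
      nlinarith [sq_nonneg (|a| - |b|), abs_nonneg a, abs_nonneg b]
    have hkey : ((n - s : ℕ) : ℝ) * (1/32) ≤
        2 * ∑ k ∈ Finset.Icc 1 n, |(k : ℝ) * α - round ((k : ℝ) * α)| ^ 2 :=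
      rs_pair_sum (fun k => |(k : ℝ) * α - round ((k : ℝ) * α)| ^ 2)
        (fun k => by positivity) s n hsn pair
    have hcast : ((n - s : ℕ) : ℝ) = (n : ℝ) - (s : ℝ) := by
      push_cast [Nat.cast_sub hsn]; ring
    have hns : ((n : ℝ) - 1) / 2 ≤ ((n - s : ℕ) : ℝ) := by
      rw [hcast]
      have : ((2 * s : ℕ) : ℝ) ≤ ((n + 1 : ℕ) : ℝ) := by exact_mod_cast hs2
      push_cast at this
      linarith
    have hn2' : (2 : ℝ) ≤ n := by exact_mod_cast hn2
    have hfinal : (n : ℝ) / 256 ≤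
        ∑ k ∈ Finset.Icc 1 n, |(k : ℝ) * α - round ((k : ℝ) * α)| ^ 2 := by
      have h1 : ((n : ℝ) - 1) / 2 * (1/32) ≤ ((n - s : ℕ) : ℝ) * (1/32) :=
        mul_le_mul_of_nonneg_right hns (by norm_num)
      linarith
    have hmin : min (ε^2/3) (1/256) * (n : ℝ) ≤ 1/256 * (n : ℝ) :=
      mul_le_mul_of_nonneg_right (min_le_right _ _) hn'.le
    linarith
end

section
/- Let a, b be coprime positive integers with 3 ≤ b ≤ n. Then Σ_{k=1}^{n} ‖k·a/b‖² ≥ n/96, where ‖·‖ is the distance to the nearest integer. -/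
open Real

theorem rational_case_bound (a b n : ℕ) (ha : 0 < a) (hcop : Nat.Coprime a b)
    (hb3 : 3 ≤ b) (hbn : b ≤ n) :
    (n : ℝ) / 96 ≤
      ∑ k ∈ Finset.Icc 1 n,
        |(k : ℝ) * a / b - round ((k : ℝ) * a / b)| ^ 2 := by
  have hb0 : 0 < b := by omega
  have hbR : (0:ℝ) < b := by exact_mod_cast hb0
  set q := n / b with hq
  set ψ : ℕ → ℕ := fun c => ((c+1)*a) % b with hψ
  set G : Finset ℕ := (Finset.range b).filter (fun j => b ≤ 4 * j ∧ 4 * j ≤ 3 * b) with hG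
  set Gc : Finset ℕ := (Finset.range b).filter
    (fun c => b ≤ 4 * ψ c ∧ 4 * ψ c ≤ 3 * b) with hGc
  set T : Finset ℕ := (Finset.Icc 1 n).filter
    (fun k => b ≤ 4 * ((k*a) % b) ∧ 4 * ((k*a) % b) ≤ 3 * b) with hT
  -- card of G
  have hGcard : b ≤ 3 * G.card := by
    have hGeq : G = Finset.Icc ((b+3)/4) (3*b/4) := by
      ext j
      simp only [hG, Finset.mem_filter, Finset.mem_range, Finset.mem_Icc]
      omega
    rw [hGeq, Nat.card_Icc]
    omega
  -- ψ is injective on range b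
  have hψinj : Set.InjOn ψ (Finset.range b) := by
    intro c hc c' hc' h
    simp only [Finset.coe_sort_coe, Finset.mem_coe, Finset.mem_range] at hc hc'
    have hmod : (c+1) * a ≡ (c'+1) * a [MOD b] := by
      simpa [Nat.ModEq, hψ] using h
    have hmm : (c+1) % b = (c'+1) % b :=
      Nat.ModEq.cancel_right_of_coprime (by simpa [Nat.Coprime] using hcop.symm) hmod
    rcases Nat.eq_or_lt_of_le (Nat.succ_le_of_lt hc) with h1 | h1
    · rcases Nat.eq_or_lt_of_le (Nat.succ_le_of_lt hc') with h2 | h2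
      · omega
      · rw [show c+1 = b from h1, Nat.mod_self, Nat.mod_eq_of_lt h2] at hmm
        omega
    · rcases Nat.eq_or_lt_of_le (Nat.succ_le_of_lt hc') with h2 | h2
      · rw [show c'+1 = b from h2, Nat.mod_self, Nat.mod_eq_of_lt h1] at hmm
        omega
      · rw [Nat.mod_eq_of_lt h1, Nat.mod_eq_of_lt h2] at hmm
        omega
  -- card Gc = card G
  have hGcG : Gc.card = G.card := by
    have himg : Finset.image ψ (Finset.range b) = Finset.range b := by
      apply Finset.eq_of_subset_of_card_le
      · intro j hj
        simp only [Finset.mem_image, Finset.mem_range] at hj ⊢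
        obtain ⟨c, _, rfl⟩ := hj
        exact Nat.mod_lt _ hb0
      · rw [Finset.card_image_of_injOn hψinj]
    have h2 : Finset.image ψ Gc = G := by
      have := Finset.filter_image (s := Finset.range b)
        (p := fun j => b ≤ 4 * j ∧ 4 * j ≤ 3 * b) (f := ψ)
      rw [hGc, hG, ← this, himg]
    calc Gc.card = (Finset.image ψ Gc).card :=
          (Finset.card_image_of_injOn (hψinj.mono (by
            intro x hx; simp only [hGc, Finset.coe_filter, Set.mem_setOf_eq] at hx
            exact Finset.mem_coe.mpr hx.1))).symm
      _ = G.card := by rw [h2]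
  -- T has at least q * Gc.card elements
  have hq1 : 1 ≤ q := (Nat.one_le_div_iff hb0).mpr hbn
  have hTcard : q * Gc.card ≤ T.card := by
    have := Finset.card_le_card_of_injOn
      (f := fun p : ℕ × ℕ => p.1 * b + p.2 + 1)
      (s := Finset.range q ×ˢ Gc) (t := T)
      (by
        rintro ⟨i, c⟩ hp
        simp only [Finset.mem_coe, Finset.mem_product, Finset.mem_range, hGc, Finset.mem_filter] at hp
        obtain ⟨hi, hc, hgood⟩ := hp
        have hcb : c < b := hc
        have hle : i * b + c + 1 ≤ n := by
          have h1 : i * b + c + 1 ≤ q * b := by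
            have : (i+1) * b ≤ q * b := Nat.mul_le_mul_right b hi
            nlinarith
          calc i * b + c + 1 ≤ q * b := h1
            _ ≤ n := by rw [hq]; exact Nat.div_mul_le_self n b
        have hmodeq : ((i * b + c + 1) * a) % b = ψ c := by
          have : (i * b + c + 1) * a = (c+1)*a + b * (i*a) := by ring
          rw [this, Nat.add_mul_mod_self_left, hψ]
        simp only [Finset.mem_coe, hT, Finset.mem_filter, Finset.mem_Icc, hmodeq]
        exact ⟨⟨by omega, hle⟩, hgood⟩)
      (by
        rintro ⟨i, c⟩ hp ⟨i', c'⟩ hp' h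
        simp only [Finset.mem_coe, Finset.mem_product, Finset.mem_range, hGc,
          Finset.mem_filter] at hp hp'
        simp only [Prod.mk.injEq] at h ⊢
        have hcb : c < b := hp.2.1
        have hcb' : c' < b := hp'.2.1
        have heq : i * b + c = i' * b + c' := by omega
        have hc : c = c' := by
          have h1 : (b * i + c) % b = c := by
            rw [Nat.mul_add_mod]; exact Nat.mod_eq_of_lt hcb
          have h2 : (b * i' + c') % b = c' := by
            rw [Nat.mul_add_mod]; exact Nat.mod_eq_of_lt hcb'
          rw [Nat.mul_comm i b, Nat.mul_comm i' b] at heq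
          rw [← h1, ← h2, heq]
        subst hc
        constructor
        · have : i * b = i' * b := by omega
          exact Nat.eq_of_mul_eq_mul_right hb0 this
        · rfl)
    simpa [Finset.card_product] using this
  -- each element of T contributes at least 1/16
  have h1 : ∀ k ∈ T, (1/16 : ℝ) ≤ |(k : ℝ) * a / b - round ((k : ℝ) * a / b)| ^ 2 := by
    intro k hk
    simp only [hT, Finset.mem_filter, Finset.mem_Icc] at hk
    obtain ⟨-, hlo, hhi⟩ := hk
    set r := (k * a) % b with hr
    set m := (k * a) / b with hm
    have hdm : b * m + r = k * a := Nat.div_add_mod (k*a) b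
    have hx : (k : ℝ) * a / b = (m : ℝ) + (r : ℝ) / b := by
      have : (k : ℝ) * a = (b : ℝ) * m + r := by exact_mod_cast hdm.symm
      rw [this]; field_simp
    have hrb : r < b := Nat.mod_lt _ hb0
    have hfr0 : (0:ℝ) ≤ (r:ℝ)/b := by positivity
    have hfr1 : (r:ℝ)/b < 1 := by
      rw [div_lt_one hbR]; exact_mod_cast hrb
    have hfract : Int.fract ((k : ℝ) * a / b) = (r : ℝ) / b := by
      rw [hx, Int.fract_natCast_add, Int.fract_eq_self.mpr ⟨hfr0, hfr1⟩]
    have hlo' : (1/4 : ℝ) ≤ (r:ℝ)/b := by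
      rw [le_div_iff₀ hbR]
      have : (b:ℝ) ≤ 4 * r := by exact_mod_cast hlo
      linarith
    have hhi' : (r:ℝ)/b ≤ 3/4 := by
      rw [div_le_div_iff₀ hbR (by norm_num : (0:ℝ) < 4)]
      have : (4:ℝ) * r ≤ 3 * b := by exact_mod_cast hhi
      linarith
    have habs : (1/4 : ℝ) ≤ |(k : ℝ) * a / b - round ((k : ℝ) * a / b)| := by
      rw [abs_sub_round_eq_min, hfract, le_min_iff]
      constructor <;> linarith
    calc (1/16 : ℝ) = (1/4 : ℝ)^2 := by norm_num
      _ ≤ |(k : ℝ) * a / b - round ((k : ℝ) * a / b)| ^ 2 :=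
          pow_le_pow_left₀ (by norm_num) habs 2
  have h2 : (T.card : ℝ) * (1/16) ≤
      ∑ k ∈ T, |(k : ℝ) * a / b - round ((k : ℝ) * a / b)| ^ 2 := by
    have := Finset.card_nsmul_le_sum T
      (fun k => |(k : ℝ) * a / b - round ((k : ℝ) * a / b)| ^ 2) (1/16 : ℝ) h1
    simpa [nsmul_eq_mul] using this
  have h3 : ∑ k ∈ T, |(k : ℝ) * a / b - round ((k : ℝ) * a / b)| ^ 2 ≤
      ∑ k ∈ Finset.Icc 1 n, |(k : ℝ) * a / b - round ((k : ℝ) * a / b)| ^ 2 :=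
    Finset.sum_le_sum_of_subset_of_nonneg (Finset.filter_subset _ _)
      (fun i _ _ => by positivity)
  -- numeric facts
  have h2bq : n ≤ 2 * (b * q) := by
    have hmod : n % b < b := Nat.mod_lt _ hb0
    have hdm : b * q + n % b = n := Nat.div_add_mod n b
    have hbq : b ≤ b * q := Nat.le_mul_of_pos_right b hq1
    omega
  have hnR : (n:ℝ) ≤ 2 * (b * q) := by exact_mod_cast h2bq
  have hGR : (b:ℝ) ≤ 3 * G.card := by exact_mod_cast hGcard
  have hTR : (q:ℝ) * G.card ≤ T.card := by
    rw [← hGcG]; exact_mod_cast hTcard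
  have hqR : (0:ℝ) ≤ (q:ℝ) := Nat.cast_nonneg q
  have key : (n:ℝ) / 96 ≤ (T.card : ℝ) * (1/16) := by
    have hm : (q:ℝ) * b ≤ (q:ℝ) * (3 * G.card) :=
      mul_le_mul_of_nonneg_left hGR hqR
    nlinarith
  linarith
end
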